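/- Let C be a connected component with n vertices in a network N, and suppose γ > 0 satisfies γ·C(n,2) < 1. Then every CPM(γ)-optimal clustering of N returns C as a single cluster. -/

import Mathlib

open Finset
open scoped Classical

/-- Edges of `E` lying inside the vertex set `c`. -/
noncomputable def inEdges {V : Type*} [DecidableEq V]
    (E : Finset (Sym2 V)) (c : Finset V) : Finset (Sym2 V) :=
  E.filter (fun e => ∀ v ∈ e, v ∈ c)

/-- The CPM(γ) score of a clustering `P` of the graph with edge set `E`. -/
noncomputable def cpm {V : Type*} [Fintype V] [DecidableEq V] (γ : ℝ)
    (E : Finset (Sym2 V)) (P : Finpartition (univ : Finset V)) : ℝ :=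
  ∑ c ∈ P.parts, (((inEdges E c).card : ℝ) - γ * (c.card.choose 2))


lemma mem_inEdges {V : Type*} [DecidableEq V] {E : Finset (Sym2 V)} {c : Finset V}
    {e : Sym2 V} : e ∈ inEdges E c ↔ e ∈ E ∧ ∀ v ∈ e, v ∈ c := by
  rw [inEdges, Finset.mem_filter]

lemma inEdges_empty {V : Type*} [DecidableEq V] (E : Finset (Sym2 V)) :
    inEdges E (∅ : Finset V) = ∅ := by
  apply Finset.eq_empty_of_forall_notMem
  intro e he
  induction e using Sym2.ind with
  | _ x y =>
    rw [inEdges, Finset.mem_filter] at he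
    exact absurd (he.2 x (Sym2.mem_mk_left x y)) (Finset.notMem_empty x)

lemma inEdges_mono {V : Type*} [DecidableEq V] (E : Finset (Sym2 V)) {c d : Finset V}
    (h : c ⊆ d) : inEdges E c ⊆ inEdges E d := by
  intro e he
  rw [inEdges, Finset.mem_filter] at he ⊢
  exact ⟨he.1, fun v hv => h (he.2 v hv)⟩

lemma inEdges_card_split {V : Type*} [DecidableEq V] (E : Finset (Sym2 V)) (C p : Finset V)
    (hE : ∀ e ∈ E, (∀ v ∈ e, v ∈ C) ∨ (∀ v ∈ e, v ∉ C)) :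
    (inEdges E p).card = (inEdges E (p ∩ C)).card + (inEdges E (p \ C)).card := by
  have hdisj : Disjoint (inEdges E (p ∩ C)) (inEdges E (p \ C)) := by
    rw [Finset.disjoint_left]
    intro e h1 h2
    induction e using Sym2.ind with
    | _ x y =>
      rw [inEdges, Finset.mem_filter] at h1 h2
      have hx1 := h1.2 x (Sym2.mem_mk_left x y)
      have hx2 := h2.2 x (Sym2.mem_mk_left x y)
      simp only [Finset.mem_inter, Finset.mem_sdiff] at hx1 hx2
      exact hx2.2 hx1.2
  have hunion : inEdges E p = inEdges E (p ∩ C) ∪ inEdges E (p \ C) := by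
    ext e
    simp only [inEdges, Finset.mem_filter, Finset.mem_union, Finset.mem_inter, Finset.mem_sdiff]
    constructor
    · rintro ⟨he, hp⟩
      rcases hE e he with h | h
      · exact Or.inl ⟨he, fun v hv => ⟨hp v hv, h v hv⟩⟩
      · exact Or.inr ⟨he, fun v hv => ⟨hp v hv, h v hv⟩⟩
    · rintro (⟨he, hp⟩ | ⟨he, hp⟩)
      · exact ⟨he, fun v hv => (hp v hv).1⟩
      · exact ⟨he, fun v hv => (hp v hv).1⟩
  rw [hunion, Finset.card_union_of_disjoint hdisj]

lemma choose_two_add (a b : ℕ) : (a + b).choose 2 = a.choose 2 + b.choose 2 + a * b := by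
  induction b with
  | zero => simp
  | succ b ih =>
    have h1 : a + (b + 1) = (a + b) + 1 := by ring
    rw [h1, Nat.choose_succ_succ, Nat.choose_one_right, ih,
      Nat.choose_succ_succ (n := b), Nat.choose_one_right]
    ring

lemma cross_of_walk {V : Type*} [DecidableEq V] {G : SimpleGraph V} {C p : Finset V}
    (hclosed : ∀ u ∈ C, ∀ v : V, G.Adj u v → v ∈ C) :
    ∀ {u v : V}, G.Walk u v → u ∈ C → u ∈ p → v ∉ p →
      ∃ a b, G.Adj a b ∧ a ∈ C ∧ b ∈ C ∧ a ∈ p ∧ b ∉ p := by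
  intro u v w
  induction w with
  | nil => intro _ hup hvp; exact absurd hup hvp
  | @cons x y z hadj wtl ih =>
    intro hu hup hvp
    have hyC : y ∈ C := hclosed x hu y hadj
    by_cases hy : y ∈ p
    · exact ih hyC hy hvp
    · exact ⟨x, y, hadj, hu, hyC, hup, hy⟩


/-- if `C` is a connected component with `n` vertices of a network `N` and
`γ * C(n,2) < 1` (with `γ > 0`), then every CPM(γ)-optimal clustering of `N` returns `C`
as a single cluster. -/
theorem stmt_7 {V : Type*} [Fintype V] [DecidableEq V]
    (G : SimpleGraph V) [DecidableRel G.Adj]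
    (γ : ℝ) (hγ : 0 < γ)
    (C : Finset V) (hne : C.Nonempty)
    (hclosed : ∀ u ∈ C, ∀ v : V, G.Adj u v → v ∈ C)
    (hconn : ∀ u ∈ C, ∀ v ∈ C, G.Reachable u v)
    (hγsmall : γ * (C.card.choose 2 : ℝ) < 1)
    (Γ : Finpartition (univ : Finset V))
    (hopt : ∀ P : Finpartition (univ : Finset V),
      cpm γ G.edgeFinset P ≤ cpm γ G.edgeFinset Γ) :
    C ∈ Γ.parts := by

  by_contra hC
  set E := G.edgeFinset with hEdef
  have hE : ∀ e ∈ E, (∀ v ∈ e, v ∈ C) ∨ (∀ v ∈ e, v ∉ C) := by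
    intro e he
    induction e using Sym2.ind with
    | _ x y =>
      rw [hEdef, SimpleGraph.mem_edgeFinset, SimpleGraph.mem_edgeSet] at he
      by_cases hx : x ∈ C
      · left; intro v hv; rw [Sym2.mem_iff] at hv
        rcases hv with rfl | rfl
        · exact hx
        · exact hclosed x hx _ he
      · right; intro v hv; rw [Sym2.mem_iff] at hv
        rcases hv with rfl | rfl
        · exact hx
        · intro hy; exact hx (hclosed _ hy x he.symm)
  have hCne : C ≠ ⊥ := by simpa [Finset.bot_eq_empty] using hne.ne_empty
  have hab : Disjoint (univ \ C) C := sdiff_disjoint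
  have hc : (univ \ C) ⊔ C = univ := by
    rw [sup_eq_union, Finset.sdiff_union_of_subset (Finset.subset_univ C)]
  set P' := (Γ.avoid C).extend hCne hab hc with hP'
  have hparts : P'.parts = insert C (Γ.avoid C).parts := Finpartition.extend_parts _ _ _ _
  have hCnotin : C ∉ (Γ.avoid C).parts := by
    intro h
    rw [Finpartition.mem_avoid] at h
    obtain ⟨d, hd, hdle, hdC⟩ := h
    obtain ⟨x, hx⟩ := hne
    have hx' : x ∈ d \ C := by rw [hdC]; exact hx
    exact (Finset.mem_sdiff.1 hx').2 hx
  set f : Finset V → ℝ := fun c => ((inEdges E c).card : ℝ) - γ * (c.card.choose 2) with hf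
  have hcpm : ∀ Q : Finpartition (univ : Finset V), cpm γ E Q = ∑ c ∈ Q.parts, f c :=
    fun Q => rfl
  have hf0 : f ∅ = 0 := by simp [hf, inEdges_empty]
  set S₁ := Γ.parts.filter (fun p => (p \ C).Nonempty) with hS₁
  have havoid : (Γ.avoid C).parts = S₁.image (· \ C) := by
    ext c
    rw [Finpartition.mem_avoid]
    simp only [Finset.mem_image, hS₁, Finset.mem_filter]
    constructor
    · rintro ⟨d, hd, hdle, rfl⟩
      exact ⟨d, ⟨hd, Finset.sdiff_nonempty.2 hdle⟩, rfl⟩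
    · rintro ⟨d, ⟨hd, hdn⟩, rfl⟩
      exact ⟨d, hd, Finset.sdiff_nonempty.1 hdn, rfl⟩
  have hsum1 : ∑ c ∈ (Γ.avoid C).parts, f c = ∑ p ∈ S₁, f (p \ C) := by
    rw [havoid]
    apply Finset.sum_image
    intro p hp q hq hpq
    rw [hS₁, Finset.mem_coe, Finset.mem_filter] at hp hq
    obtain ⟨x, hx⟩ := hp.2
    have hxq : x ∈ q \ C := (show p \ C = q \ C from hpq) ▸ hx
    exact Γ.eq_of_mem_parts hp.1 hq.1 (Finset.mem_sdiff.1 hx).1 (Finset.mem_sdiff.1 hxq).1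
  have hsum2 : ∑ p ∈ Γ.parts, f (p \ C) = ∑ p ∈ S₁, f (p \ C) := by
    rw [← Finset.sum_filter_add_sum_filter_not Γ.parts (fun p => (p \ C).Nonempty)
      (fun p => f (p \ C))]
    have hz : ∑ p ∈ Γ.parts.filter (fun p => ¬ (p \ C).Nonempty), f (p \ C) = 0 := by
      apply Finset.sum_eq_zero
      intro p hp
      rw [Finset.mem_filter, Finset.not_nonempty_iff_eq_empty] at hp
      rw [hp.2, hf0]
    rw [hz, hS₁]; ring
  have hcpmP' : cpm γ E P' = f C + ∑ p ∈ Γ.parts, f (p \ C) := by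
    rw [hcpm, hparts, Finset.sum_insert hCnotin, hsum1, hsum2]
  have key : ∀ p ∈ Γ.parts, f p - f (p \ C) =
      ((inEdges E (p ∩ C)).card : ℝ) -
        γ * (((p ∩ C).card.choose 2 : ℝ) + (p ∩ C).card * (p \ C).card) := by
    intro p hp
    have hcard : p.card = (p ∩ C).card + (p \ C).card :=
      (Finset.card_inter_add_card_sdiff p C).symm
    rw [hf]
    simp only
    rw [inEdges_card_split E C p hE, hcard, choose_two_add]
    push_cast
    ring
  have hdiff : cpm γ E P' - cpm γ E Γ = f C - ∑ p ∈ Γ.parts,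
      (((inEdges E (p ∩ C)).card : ℝ) -
        γ * (((p ∩ C).card.choose 2 : ℝ) + (p ∩ C).card * (p \ C).card)) := by
    rw [hcpmP', hcpm Γ]
    have h1 : ∑ p ∈ Γ.parts, f p - ∑ p ∈ Γ.parts, f (p \ C)
        = ∑ p ∈ Γ.parts, (f p - f (p \ C)) := (Finset.sum_sub_distrib _ _).symm
    have h2 := Finset.sum_congr rfl key
    linarith [h1, h2]
  have hlt : ∑ p ∈ Γ.parts,
      (((inEdges E (p ∩ C)).card : ℝ) -
        γ * (((p ∩ C).card.choose 2 : ℝ) + (p ∩ C).card * (p \ C).card)) < f C := by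
    by_cases hcase : ∃ p ∈ Γ.parts, C ⊆ p
    · obtain ⟨p, hp, hCp⟩ := hcase
      have hpC : p ∩ C = C := Finset.inter_eq_right.2 hCp
      have hpne : p ≠ C := fun h => hC (h ▸ hp)
      have hbpos : (p \ C).Nonempty := by
        rw [Finset.sdiff_nonempty]
        intro h
        exact hpne (Finset.Subset.antisymm h hCp)
      have hzero : ∀ q ∈ Γ.parts, q ≠ p → q ∩ C = ∅ := by
        intro q hq hqp
        rw [← Finset.disjoint_iff_inter_eq_empty]
        exact Finset.disjoint_of_subset_right hCp
          (Γ.disjoint (Finset.mem_coe.2 hq) (Finset.mem_coe.2 hp) hqp)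
      have hsum : ∑ q ∈ Γ.parts,
          (((inEdges E (q ∩ C)).card : ℝ) -
            γ * (((q ∩ C).card.choose 2 : ℝ) + (q ∩ C).card * (q \ C).card))
          = ((inEdges E (p ∩ C)).card : ℝ) -
            γ * (((p ∩ C).card.choose 2 : ℝ) + (p ∩ C).card * (p \ C).card) := by
        apply Finset.sum_eq_single_of_mem p hp
        intro q hq hqp
        rw [hzero q hq hqp]
        simp [inEdges_empty]
      rw [hsum, hpC, hf]
      simp only
      have hn1 : 1 ≤ C.card := Finset.card_pos.2 hne
      have hb1 : 1 ≤ (p \ C).card := Finset.card_pos.2 hbpos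
      have hpos : 0 < γ * ((C.card : ℝ) * (p \ C).card) := by
        apply mul_pos hγ
        apply mul_pos <;> exact_mod_cast Nat.lt_of_lt_of_le Nat.zero_lt_one ‹_›
      nlinarith
    · push_neg at hcase
      obtain ⟨u, hu⟩ := hne
      have hup := Γ.mem_part (Finset.mem_univ u)
      have hpmem := Γ.part_mem.2 (Finset.mem_univ u)
      obtain ⟨v, hv, hvp⟩ := Finset.not_subset.1 (hcase _ hpmem)
      obtain ⟨w⟩ := hconn u hu v hv
      obtain ⟨a, b, hadj, haC, hbC, hap, hbp⟩ := cross_of_walk hclosed w hu hup hvp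
      set e₀ : Sym2 V := s(a, b) with he₀
      have he₀E : e₀ ∈ E := by
        rw [hEdef, SimpleGraph.mem_edgeFinset, he₀, SimpleGraph.mem_edgeSet]
        exact hadj
      have he₀C : e₀ ∈ inEdges E C := by
        rw [mem_inEdges]
        refine ⟨he₀E, ?_⟩
        intro x hx
        rw [he₀, Sym2.mem_iff] at hx
        rcases hx with rfl | rfl
        · exact haC
        · exact hbC
      have hnat : (∑ q ∈ Γ.parts, (inEdges E (q ∩ C)).card) + 1 ≤ (inEdges E C).card := by
        have hd : ∀ q ∈ Γ.parts, ∀ r ∈ Γ.parts, q ≠ r →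
            Disjoint (inEdges E (q ∩ C)) (inEdges E (r ∩ C)) := by
          intro q hq r hr hqr
          rw [Finset.disjoint_left]
          intro e h1 h2
          induction e using Sym2.ind with
          | _ x y =>
            rw [mem_inEdges] at h1 h2
            have hx1 := h1.2 x (Sym2.mem_mk_left x y)
            have hx2 := h2.2 x (Sym2.mem_mk_left x y)
            exact hqr (Γ.eq_of_mem_parts hq hr (Finset.mem_inter.1 hx1).1
              (Finset.mem_inter.1 hx2).1)
        rw [← Finset.card_biUnion hd]
        have hsub : Γ.parts.biUnion (fun q => inEdges E (q ∩ C)) ⊆ (inEdges E C).erase e₀ := by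
          intro e he
          rw [Finset.mem_biUnion] at he
          obtain ⟨q, hq, heq⟩ := he
          rw [Finset.mem_erase]
          constructor
          · rintro rfl
            rw [mem_inEdges] at heq
            have ha' := heq.2 a (by rw [he₀]; exact Sym2.mem_mk_left a b)
            have hb' := heq.2 b (by rw [he₀]; exact Sym2.mem_mk_right a b)
            have hqp : q = Γ.part u :=
              Γ.eq_of_mem_parts hq hpmem (Finset.mem_inter.1 ha').1 hap
            exact hbp (hqp ▸ (Finset.mem_inter.1 hb').1)
          · exact inEdges_mono E Finset.inter_subset_right heq
        have hle := Finset.card_le_card hsub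
        rw [Finset.card_erase_of_mem he₀C] at hle
        have hpos : 1 ≤ (inEdges E C).card := Finset.card_pos.2 ⟨e₀, he₀C⟩
        omega
      have hterm : ∀ q ∈ Γ.parts,
          ((inEdges E (q ∩ C)).card : ℝ) -
            γ * (((q ∩ C).card.choose 2 : ℝ) + (q ∩ C).card * (q \ C).card)
          ≤ ((inEdges E (q ∩ C)).card : ℝ) := by
        intro q hq
        have h0 : (0:ℝ) ≤ γ * (((q ∩ C).card.choose 2 : ℝ) + (q ∩ C).card * (q \ C).card) := by
          apply mul_nonneg hγ.le
          have := Nat.cast_nonneg (α := ℝ) ((q ∩ C).card.choose 2)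
          have := Nat.cast_nonneg (α := ℝ) (q ∩ C).card
          have := Nat.cast_nonneg (α := ℝ) (q \ C).card
          nlinarith
        linarith
      have h1 : ∑ q ∈ Γ.parts,
          (((inEdges E (q ∩ C)).card : ℝ) -
            γ * (((q ∩ C).card.choose 2 : ℝ) + (q ∩ C).card * (q \ C).card))
          ≤ ∑ q ∈ Γ.parts, ((inEdges E (q ∩ C)).card : ℝ) :=
        Finset.sum_le_sum hterm
      have h2 : ∑ q ∈ Γ.parts, ((inEdges E (q ∩ C)).card : ℝ)
          ≤ ((inEdges E C).card : ℝ) - 1 := by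
        have := hnat
        have hcast : ((∑ q ∈ Γ.parts, (inEdges E (q ∩ C)).card : ℕ) : ℝ)
            = ∑ q ∈ Γ.parts, ((inEdges E (q ∩ C)).card : ℝ) := by push_cast; rfl
        rw [← hcast]
        have : ((∑ q ∈ Γ.parts, (inEdges E (q ∩ C)).card : ℕ) : ℝ) + 1
            ≤ ((inEdges E C).card : ℝ) := by exact_mod_cast hnat
        linarith
      rw [hf]
      simp only
      linarith
  have hle := hopt P'
  linarith [hdiff, hlt]
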